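/- arXiv:0704.0708 — 6 statements merged into one kernel-verified Lean document; each statement's English description precedes it below -/
import Mathlib

section
/- Let u, v : ℝ^d → ℝ be twice continuously differentiable and let h : ℝ^d → ℝ^d be a continuously differentiable vector field. Then for every x ∈ ℝ^d one has the pointwise identity ⟨∇u(x), A_h(x) ∇v(x)⟩ = ⟨∇(y ↦ ⟨h(y), ∇u(y)⟩)(x), ∇v(x)⟩ + ⟨∇(y ↦ ⟨h(y), ∇v(y)⟩)(x), ∇u(x)⟩ − div(y ↦ ⟨∇u(y), ∇v(y)⟩ h(y))(x). -/
open scoped RealInnerProductSpace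

noncomputable section

abbrev E (d : ℕ) := EuclideanSpace ℝ (Fin d)

/-- Divergence of a vector field: trace of its Jacobian (Fréchet derivative). -/
def vdiv {d : ℕ} (V : E d → E d) (x : E d) : ℝ :=
  LinearMap.trace ℝ (E d) (fderiv ℝ V x).toLinearMap

/-- `A_h(x) = Dh(x) + Dh(x)ᵀ − (div h(x)) I`. -/
def Amat {d : ℕ} (h : E d → E d) (x : E d) : E d →L[ℝ] E d :=
  fderiv ℝ h x + ContinuousLinearMap.adjoint (fderiv ℝ h x) -
    vdiv h x • ContinuousLinearMap.id ℝ (E d)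

/-- Pairing a gradient against a vector is the Fréchet derivative. -/
lemma inner_gradient_aux {d : ℕ} (f : E d → ℝ) (x w : E d) :
    ⟪gradient f x, w⟫ = fderiv ℝ f x w := InnerProductSpace.toDual_symm_apply

/-- Trace of a rank-one map `φ(·) • v` is `φ v`. -/
lemma trace_smulRight_aux {d : ℕ} (φ : E d →ₗ[ℝ] ℝ) (v : E d) :
    LinearMap.trace ℝ (E d) (φ.smulRight v) = φ v := by
  have h1 : φ.smulRight v = (LinearMap.toSpanSingleton ℝ (E d) v).comp φ := by
    ext y; simp [LinearMap.toSpanSingleton_apply]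
  rw [h1, LinearMap.trace_comp_comm']
  have h2 : φ.comp (LinearMap.toSpanSingleton ℝ (E d) v) = (φ v) • LinearMap.id := by
    ext; simp [LinearMap.toSpanSingleton_apply]
  rw [h2, map_smul, LinearMap.trace_id]
  simp

/-- Gradient of a `C²` function is `C¹`. -/
lemma contDiff_gradient_aux {d : ℕ} {u : E d → ℝ} (hu : ContDiff ℝ 2 u) :
    ContDiff ℝ 1 (gradient u) := by
  have : gradient u = ⇑(InnerProductSpace.toDual ℝ (E d)).symm ∘ fderiv ℝ u := rfl
  rw [this]
  exact (InnerProductSpace.toDual ℝ (E d)).symm.contDiff.comp (hu.fderiv_right le_rfl)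

/-- Symmetry of the Hessian (derivative of the gradient) of a `C²` function. -/
lemma hess_symm_aux {d : ℕ} {u : E d → ℝ} (hu : ContDiff ℝ 2 u) (x w z : E d) :
    ⟪fderiv ℝ (gradient u) x w, z⟫ = ⟪fderiv ℝ (gradient u) x z, w⟫ := by
  have hgrad : gradient u = ⇑(InnerProductSpace.toDual ℝ (E d)).symm ∘ fderiv ℝ u := rfl
  have hcomp := LinearIsometryEquiv.comp_fderiv
    (iso := (InnerProductSpace.toDual ℝ (E d)).symm) (f := fderiv ℝ u) (x := x) (𝕜 := ℝ)
  have hsym : ∀ a b : E d, fderiv ℝ (fderiv ℝ u) x a b = fderiv ℝ (fderiv ℝ u) x b a := by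
    intro a b
    apply second_derivative_symmetric (f := u) (f' := fderiv ℝ u)
    · intro y; exact (hu.differentiable two_ne_zero y).hasFDerivAt
    · exact ((hu.fderiv_right (m := 1) le_rfl).differentiable one_ne_zero x).hasFDerivAt
  have key : ∀ a b : E d, ⟪fderiv ℝ (gradient u) x a, b⟫ = fderiv ℝ (fderiv ℝ u) x a b := by
    intro a b
    rw [hgrad, hcomp]
    simp only [ContinuousLinearMap.comp_apply, ContinuousLinearEquiv.coe_coe,
      LinearIsometryEquiv.coe_toContinuousLinearEquiv]
    exact InnerProductSpace.toDual_symm_apply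
  rw [key, key, hsym]

theorem statement0 {d : ℕ} (u v : E d → ℝ) (h : E d → E d)
    (hu : ContDiff ℝ 2 u) (hv : ContDiff ℝ 2 v) (hh : ContDiff ℝ 1 h)
    (x : E d) :
    ⟪gradient u x, Amat h x (gradient v x)⟫ =
      ⟪gradient (fun y => ⟪h y, gradient u y⟫) x, gradient v x⟫ +
      ⟪gradient (fun y => ⟪h y, gradient v y⟫) x, gradient u x⟫ -
      vdiv (fun y => ⟪gradient u y, gradient v y⟫ • h y) x := by
  have hgu : ContDiff ℝ 1 (gradient u) := contDiff_gradient_aux hu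
  have hgv : ContDiff ℝ 1 (gradient v) := contDiff_gradient_aux hv
  have hhd : ∀ y, DifferentiableAt ℝ h y := fun y => (hh.differentiable one_ne_zero) y
  have hgud : ∀ y, DifferentiableAt ℝ (gradient u) y := fun y => (hgu.differentiable one_ne_zero) y
  have hgvd : ∀ y, DifferentiableAt ℝ (gradient v) y := fun y => (hgv.differentiable one_ne_zero) y
  set gu := gradient u x with hgu_def
  set gv := gradient v x with hgv_def
  set Dh := fderiv ℝ h x with hDh_def
  set Hu := fderiv ℝ (gradient u) x with hHu_def
  set Hv := fderiv ℝ (gradient v) x with hHv_def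
  -- Term 1
  have T1 : ⟪gradient (fun y => ⟪h y, gradient u y⟫) x, gv⟫ =
      ⟪h x, Hu gv⟫ + ⟪Dh gv, gu⟫ := by
    rw [inner_gradient_aux, fderiv_inner_apply ℝ (hhd x) (hgud x)]
  -- Term 2
  have T2 : ⟪gradient (fun y => ⟪h y, gradient v y⟫) x, gu⟫ =
      ⟪h x, Hv gu⟫ + ⟪Dh gu, gv⟫ := by
    rw [inner_gradient_aux, fderiv_inner_apply ℝ (hhd x) (hgvd x)]
  -- Divergence term
  have hfd : DifferentiableAt ℝ (fun y => ⟪gradient u y, gradient v y⟫) x :=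
    (hgud x).inner ℝ (hgvd x)
  have T3 : vdiv (fun y => ⟪gradient u y, gradient v y⟫ • h y) x =
      ⟪gu, gv⟫ * vdiv h x + (⟪gu, Hv (h x)⟫ + ⟪Hu (h x), gv⟫) := by
    have hder : fderiv ℝ (fun y => ⟪gradient u y, gradient v y⟫ • h y) x =
        ⟪gu, gv⟫ • Dh + (fderiv ℝ (fun y => ⟪gradient u y, gradient v y⟫) x).smulRight (h x) :=
      fderiv_smul hfd (hhd x)
    rw [vdiv, hder]
    have hcoe : ((⟪gu, gv⟫ • Dh + (fderiv ℝ (fun y => ⟪gradient u y, gradient v y⟫) x).smulRight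
        (h x) : E d →L[ℝ] E d) : E d →ₗ[ℝ] E d) =
        ⟪gu, gv⟫ • (Dh : E d →ₗ[ℝ] E d) +
        ((fderiv ℝ (fun y => ⟪gradient u y, gradient v y⟫) x : E d →ₗ[ℝ] ℝ)).smulRight (h x) := by
      rfl
    rw [hcoe, map_add, map_smul, trace_smulRight_aux]
    have : (fderiv ℝ (fun y => ⟪gradient u y, gradient v y⟫) x) (h x) =
        ⟪gu, Hv (h x)⟫ + ⟪Hu (h x), gv⟫ :=
      fderiv_inner_apply ℝ (hgud x) (hgvd x) (h x)
    simp only [ContinuousLinearMap.coe_coe] at this ⊢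
    rw [this, vdiv, ← hDh_def, smul_eq_mul]
  -- Left-hand side
  have LHS : ⟪gu, Amat h x gv⟫ =
      ⟪gu, Dh gv⟫ + ⟪Dh gu, gv⟫ - vdiv h x * ⟪gu, gv⟫ := by
    rw [Amat]
    simp only [ContinuousLinearMap.sub_apply, ContinuousLinearMap.add_apply,
      ContinuousLinearMap.smul_apply, ContinuousLinearMap.id_apply]
    rw [inner_sub_right, inner_add_right, real_inner_smul_right,
      ContinuousLinearMap.adjoint_inner_right]
  -- Hessian symmetry
  have su : ⟪h x, Hu gv⟫ = ⟪Hu (h x), gv⟫ :=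
    (real_inner_comm _ _).symm.trans (hess_symm_aux hu x gv (h x))
  have sv : ⟪h x, Hv gu⟫ = ⟪gu, Hv (h x)⟫ :=
    ((real_inner_comm _ _).symm.trans (hess_symm_aux hv x gu (h x))).trans
      (real_inner_comm _ _).symm
  rw [LHS, T1, T2, T3, su, sv, show ⟪Dh gv, gu⟫ = ⟪gu, Dh gv⟫ from real_inner_comm _ _]
  ring
end
end

section
/- Let u, v : ℝ^d → ℝ be twice continuously differentiable, let h₁ : ℝ^d → ℝ^d be twice continuously differentiable and h₂ : ℝ^d → ℝ^d be continuously differentiable. Define the matrix field 𝔸 = Dh₂ · A_{h₁} + A_{h₁} · Dh₂ᵀ − (div h₂) A_{h₁} − (A_{h₁})'(h₂), where (A_{h₁})'(h₂)(x) is the matrix whose (k,l) entry is ⟨∇((A_{h₁})_{k,l})(x), h₂(x)⟩, and the vector field b = ⟨h₂, ∇u⟩ A_{h₁}∇v + ⟨h₂, ∇v⟩ A_{h₁}∇u − ⟨A_{h₁}∇u, ∇v⟩ h₂. Then for every x ∈ ℝ^d, ⟨∇u(x), 𝔸(x) ∇v(x)⟩ = div b(x) − ⟨h₂(x), ∇u(x)⟩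 · div(A_{h₁}∇v)(x) − ⟨h₂(x), ∇v(x)⟩ · div(A_{h₁}∇u)(x). -/
open scoped RealInnerProductSpace

noncomputable section

/-- `𝔸 = Dh₂ · A_{h₁} + A_{h₁} · Dh₂ᵀ − (div h₂) A_{h₁} − (A_{h₁})'(h₂)`, where the last term
is the derivative of the matrix field `y ↦ A_{h₁}(y)` at `x` in the direction `h₂(x)`
(entrywise, its (k,l) entry is `⟨∇((A_{h₁})_{k,l})(x), h₂(x)⟩`). -/
def AAmat {d : ℕ} (h₁ h₂ : E d → E d) (x : E d) : E d →L[ℝ] E d :=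
  (fderiv ℝ h₂ x).comp (Amat h₁ x)
    + (Amat h₁ x).comp (ContinuousLinearMap.adjoint (fderiv ℝ h₂ x))
    - vdiv h₂ x • Amat h₁ x
    - fderiv ℝ (fun y => Amat h₁ y) x (h₂ x)

/-- `b = ⟨h₂, ∇u⟩ A_{h₁}∇v + ⟨h₂, ∇v⟩ A_{h₁}∇u − ⟨A_{h₁}∇u, ∇v⟩ h₂`. -/
def bfield {d : ℕ} (u v : E d → ℝ) (h₁ h₂ : E d → E d) (y : E d) : E d :=
  ⟪h₂ y, gradient u y⟫ • Amat h₁ y (gradient v y)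
    + ⟪h₂ y, gradient v y⟫ • Amat h₁ y (gradient u y)
    - ⟪Amat h₁ y (gradient u y), gradient v y⟫ • h₂ y

namespace Statement1Aux

variable {d : ℕ}

lemma trace_smulRight' (f : E d →L[ℝ] ℝ) (v : E d) :
    LinearMap.trace ℝ (E d) (f.smulRight v).toLinearMap = f v := by
  have h : (f.smulRight v).toLinearMap = dualTensorHom ℝ (E d) (E d) (f.toLinearMap ⊗ₜ v) := by
    ext ξ; simp [dualTensorHom_apply]
  rw [h, LinearMap.trace_eq_contract_apply, contractLeft_apply]; rfl

lemma vdiv_add {V W : E d → E d} {x : E d} (hV : DifferentiableAt ℝ V x)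
    (hW : DifferentiableAt ℝ W x) :
    vdiv (fun y => V y + W y) x = vdiv V x + vdiv W x := by
  unfold vdiv
  rw [fderiv_fun_add hV hW]
  simp [map_add]

lemma vdiv_sub {V W : E d → E d} {x : E d} (hV : DifferentiableAt ℝ V x)
    (hW : DifferentiableAt ℝ W x) :
    vdiv (fun y => V y - W y) x = vdiv V x - vdiv W x := by
  unfold vdiv
  rw [fderiv_fun_sub hV hW]
  simp [map_sub]

lemma vdiv_smul {f : E d → ℝ} {V : E d → E d} {x : E d} (hf : DifferentiableAt ℝ f x)
    (hV : DifferentiableAt ℝ V x) :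
    vdiv (fun y => f y • V y) x = fderiv ℝ f x (V x) + f x * vdiv V x := by
  unfold vdiv
  rw [fderiv_fun_smul hf hV]
  simp only [ContinuousLinearMap.coe_add, map_add, ContinuousLinearMap.coe_smul, map_smul]
  rw [trace_smulRight']
  rw [smul_eq_mul]; ring

lemma contDiff_gradient {u : E d → ℝ} (hu : ContDiff ℝ 2 u) : ContDiff ℝ 1 (gradient u) := by
  have h1 : ContDiff ℝ 1 (fderiv ℝ u) := hu.fderiv_right (by norm_num)
  have h2 : gradient u = fun y => (InnerProductSpace.toDual ℝ (E d)).symm (fderiv ℝ u y) := rfl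
  rw [h2]
  exact ((InnerProductSpace.toDual ℝ
    (E d)).symm.toContinuousLinearEquiv.toContinuousLinearMap).contDiff.comp h1

def traceCLM (d : ℕ) : (E d →L[ℝ] E d) →L[ℝ] ℝ :=
  LinearMap.toContinuousLinearMap ((LinearMap.trace ℝ (E d)).comp (ContinuousLinearMap.coeLM ℝ))

lemma contDiff_vdiv {h : E d → E d} (hh : ContDiff ℝ 2 h) : ContDiff ℝ 1 (vdiv h) := by
  have h1 : ContDiff ℝ 1 (fderiv ℝ h) := hh.fderiv_right (by norm_num)
  exact (traceCLM d).contDiff.comp h1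

lemma contDiff_amat {h : E d → E d} (hh : ContDiff ℝ 2 h) :
    ContDiff ℝ 1 (fun y => Amat h y) := by
  have h1 : ContDiff ℝ 1 (fderiv ℝ h) := hh.fderiv_right (by norm_num)
  have hadj : ContDiff ℝ 1 (fun y => ContinuousLinearMap.adjoint (fderiv ℝ h y)) := by
    exact (ContinuousLinearMap.adjoint.toContinuousLinearEquiv.toContinuousLinearMap).contDiff.comp h1
  exact (h1.add hadj).sub ((contDiff_vdiv hh).smul contDiff_const)

lemma amat_adjoint (h : E d → E d) (x : E d) :
    ContinuousLinearMap.adjoint (Amat h x) = Amat h x := by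
  unfold Amat
  simp [map_sub, map_add, map_smul, ContinuousLinearMap.adjoint_adjoint,
    ContinuousLinearMap.adjoint_id]
  abel

lemma amat_inner (h : E d → E d) (x : E d) (a b : E d) :
    ⟪Amat h x a, b⟫ = ⟪a, Amat h x b⟫ := by
  conv_lhs => rw [← amat_adjoint h x]
  rw [ContinuousLinearMap.adjoint_inner_left]

lemma hess_symm {u : E d → ℝ} (hu : ContDiff ℝ 2 u) (x : E d) (ξ η : E d) :
    ⟪fderiv ℝ (gradient u) x ξ, η⟫ = ⟪fderiv ℝ (gradient u) x η, ξ⟫ := by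
  have hsymm : IsSymmSndFDerivAt ℝ u x := hu.contDiffAt.isSymmSndFDerivAt (by simp)
  have key : ∀ ζ, fderiv ℝ (gradient u) x ζ =
      (InnerProductSpace.toDual ℝ (E d)).symm (fderiv ℝ (fderiv ℝ u) x ζ) := by
    intro ζ
    rw [show gradient u = (⇑(InnerProductSpace.toDual ℝ (E d)).symm ∘ fderiv ℝ u) from rfl,
      (InnerProductSpace.toDual ℝ (E d)).symm.comp_fderiv]
    rfl
  rw [key ξ, key η, InnerProductSpace.toDual_symm_apply, InnerProductSpace.toDual_symm_apply]
  exact hsymm ξ η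

lemma amat_deriv_inner (h₁ : E d → E d) (x ξ a b : E d) :
    ⟪fderiv ℝ (fun y => Amat h₁ y) x ξ a, b⟫ = ⟪a, fderiv ℝ (fun y => Amat h₁ y) x ξ b⟫ := by
  have key : ContinuousLinearMap.adjoint (fderiv ℝ (fun y => Amat h₁ y) x ξ)
      = fderiv ℝ (fun y => Amat h₁ y) x ξ := by
    have h2 : (fun y => Amat h₁ y) =
        (⇑(ContinuousLinearMap.adjoint :
            (E d →L[ℝ] E d) ≃ₗᵢ[ℝ] (E d →L[ℝ] E d)) ∘ fun y => Amat h₁ y) := by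
      funext y
      exact (amat_adjoint h₁ y).symm
    conv_rhs => rw [h2, (ContinuousLinearMap.adjoint :
      (E d →L[ℝ] E d) ≃ₗᵢ[ℝ] (E d →L[ℝ] E d)).comp_fderiv]
    rfl
  conv_lhs => rw [← key]
  rw [ContinuousLinearMap.adjoint_inner_left]

end Statement1Aux

open Statement1Aux in
theorem statement1 {d : ℕ} (u v : E d → ℝ) (h₁ h₂ : E d → E d)
    (hu : ContDiff ℝ 2 u) (hv : ContDiff ℝ 2 v)
    (hh₁ : ContDiff ℝ 2 h₁) (hh₂ : ContDiff ℝ 1 h₂)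
    (x : E d) :
    ⟪gradient u x, AAmat h₁ h₂ x (gradient v x)⟫ =
      vdiv (bfield u v h₁ h₂) x
      - ⟪h₂ x, gradient u x⟫ * vdiv (fun y => Amat h₁ y (gradient v y)) x
      - ⟪h₂ x, gradient v x⟫ * vdiv (fun y => Amat h₁ y (gradient u y)) x := by
  have hgu : ContDiff ℝ 1 (gradient u) := contDiff_gradient hu
  have hgv : ContDiff ℝ 1 (gradient v) := contDiff_gradient hv
  have hA : ContDiff ℝ 1 (fun y => Amat h₁ y) := contDiff_amat hh₁
  have dgu : DifferentiableAt ℝ (gradient u) x := (hgu.differentiable one_ne_zero) x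
  have dgv : DifferentiableAt ℝ (gradient v) x := (hgv.differentiable one_ne_zero) x
  have dA : DifferentiableAt ℝ (fun y => Amat h₁ y) x := (hA.differentiable one_ne_zero) x
  have dh2 : DifferentiableAt ℝ h₂ x := (hh₂.differentiable one_ne_zero) x
  have dF : DifferentiableAt ℝ (fun y => Amat h₁ y (gradient v y)) x := dA.clm_apply dgv
  have dG : DifferentiableAt ℝ (fun y => Amat h₁ y (gradient u y)) x := dA.clm_apply dgu
  have dal : DifferentiableAt ℝ (fun y => ⟪h₂ y, gradient u y⟫) x := dh2.inner ℝ dgu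
  have dbe : DifferentiableAt ℝ (fun y => ⟪h₂ y, gradient v y⟫) x := dh2.inner ℝ dgv
  have dga : DifferentiableAt ℝ (fun y => ⟪Amat h₁ y (gradient u y), gradient v y⟫) x :=
    dG.inner ℝ dgv
  have hb : vdiv (bfield u v h₁ h₂) x =
      fderiv ℝ (fun y => ⟪h₂ y, gradient u y⟫) x (Amat h₁ x (gradient v x))
      + ⟪h₂ x, gradient u x⟫ * vdiv (fun y => Amat h₁ y (gradient v y)) x
      + (fderiv ℝ (fun y => ⟪h₂ y, gradient v y⟫) x (Amat h₁ x (gradient u x))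
      + ⟪h₂ x, gradient v x⟫ * vdiv (fun y => Amat h₁ y (gradient u y)) x)
      - (fderiv ℝ (fun y => ⟪Amat h₁ y (gradient u y), gradient v y⟫) x (h₂ x)
      + ⟪Amat h₁ x (gradient u x), gradient v x⟫ * vdiv h₂ x) := by
    unfold bfield
    rw [vdiv_sub ((dal.fun_smul dF).fun_add (dbe.fun_smul dG)) (dga.fun_smul dh2),
        vdiv_add (dal.fun_smul dF) (dbe.fun_smul dG),
        vdiv_smul dal dF, vdiv_smul dbe dG, vdiv_smul dga dh2]
  rw [hb]
  rw [fderiv_inner_apply ℝ dh2 dgu, fderiv_inner_apply ℝ dh2 dgv, fderiv_inner_apply ℝ dG dgv]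
  rw [fderiv_clm_apply dA dgu]
  simp only [ContinuousLinearMap.add_apply, ContinuousLinearMap.coe_comp',
    Function.comp_apply, ContinuousLinearMap.flip_apply]
  unfold AAmat
  simp only [ContinuousLinearMap.sub_apply, ContinuousLinearMap.add_apply,
    ContinuousLinearMap.coe_comp', Function.comp_apply, ContinuousLinearMap.smul_apply,
    smul_eq_mul]
  rw [inner_sub_right, inner_sub_right, inner_add_right, inner_add_left,
    real_inner_smul_right]
  have e1 : ⟪gradient u x, fderiv ℝ h₂ x (Amat h₁ x (gradient v x))⟫
      = ⟪fderiv ℝ h₂ x (Amat h₁ x (gradient v x)), gradient u x⟫ := real_inner_comm _ _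
  have e2 : ⟪gradient u x,
        Amat h₁ x (ContinuousLinearMap.adjoint (fderiv ℝ h₂ x) (gradient v x))⟫
      = ⟪fderiv ℝ h₂ x (Amat h₁ x (gradient u x)), gradient v x⟫ := by
    rw [← amat_inner, ContinuousLinearMap.adjoint_inner_right]
  have e3 : ⟪gradient u x, Amat h₁ x (gradient v x)⟫
      = ⟪Amat h₁ x (gradient u x), gradient v x⟫ := (amat_inner _ _ _ _).symm
  have e4 : ⟪gradient u x, fderiv ℝ (fun y => Amat h₁ y) x (h₂ x) (gradient v x)⟫
      = ⟪fderiv ℝ (fun y => Amat h₁ y) x (h₂ x) (gradient u x), gradient v x⟫ :=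
    (amat_deriv_inner h₁ x (h₂ x) _ _).symm
  have e5 : ⟪h₂ x, fderiv ℝ (gradient u) x (Amat h₁ x (gradient v x))⟫
      = ⟪Amat h₁ x (fderiv ℝ (gradient u) x (h₂ x)), gradient v x⟫ := by
    rw [real_inner_comm, hess_symm hu, real_inner_comm, amat_inner]
    exact real_inner_comm _ _
  have e6 : ⟪h₂ x, fderiv ℝ (gradient v) x (Amat h₁ x (gradient u x))⟫
      = ⟪Amat h₁ x (gradient u x), fderiv ℝ (gradient v) x (h₂ x)⟫ := by
    rw [real_inner_comm, hess_symm hv, real_inner_comm]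
  rw [e1, e2, e3, e4, e5, e6]
  ring
end
end

section
/- Let M be a d×d real matrix and let n ∈ ℝ^d be a unit vector. Then (i) the function γ : t ↦ det(I + tM) has derivative γ'(0) = tr M at t = 0, and (ii) the function γ_τ : t ↦ det(I + tM) · ‖((I + tM)⁻¹)ᵀ n‖ (defined for all t small enough that I + tM is invertible) has derivative γ_τ'(0) = tr M − ⟨M n, n⟩ at t = 0. (With M = Dh(x) the Jacobian of a C¹ deformation field h at a boundary point x with unit normal n, these are the derivatives γ'(0) = div h and γ_τ'(0) = div_τ h of the volume and surface Jacobians of the transport map T_t = Id + t h.) -/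
open scoped RealInnerProductSpace
open Matrix

noncomputable section
set_option maxHeartbeats 1000000

attribute [local instance] Matrix.linftyOpNormedRing Matrix.linftyOpNormedAlgebra

theorem statement3 {d : ℕ} (M : Matrix (Fin d) (Fin d) ℝ)
    (n : EuclideanSpace ℝ (Fin d)) (hn : ‖n‖ = 1) :
    -- (i) derivative of the volume Jacobian `γ(t) = det(I + tM)` at `t = 0`
    HasDerivAt (fun t : ℝ => ((1 : Matrix (Fin d) (Fin d) ℝ) + t • M).det) M.trace 0 ∧
    -- (ii) derivative of the surface Jacobian
    -- `γ_τ(t) = det(I + tM) · ‖((I + tM)⁻¹)ᵀ n‖` at `t = 0`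
    HasDerivAt
      (fun t : ℝ =>
        ((1 : Matrix (Fin d) (Fin d) ℝ) + t • M).det *
          ‖Matrix.toEuclideanLin ((((1 : Matrix (Fin d) (Fin d) ℝ) + t • M)⁻¹)ᵀ) n‖)
      (M.trace - ⟪Matrix.toEuclideanLin M n, n⟫) 0 := by
  set A : ℝ → Matrix (Fin d) (Fin d) ℝ := fun t => (1 : Matrix (Fin d) (Fin d) ℝ) + t • M with hAdef
  have hA0 : A 0 = 1 := by simp [hAdef]
  -- (i)
  have hdet : HasDerivAt (fun t : ℝ => (A t).det) M.trace 0 := by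
    set q : Polynomial ℝ := (Matrix.det (1 + (Polynomial.X : Polynomial ℝ) •
      M.map Polynomial.C)).divX.divX with hq
    have heq : (fun t : ℝ => (A t).det) =
        fun t : ℝ => 1 + M.trace * t + q.eval t * t ^ 2 := by
      funext t
      exact Matrix.det_one_add_smul t M
    rw [heq]
    have h1 : HasDerivAt (fun t : ℝ => 1 + M.trace * t) M.trace 0 := by
      simpa using (hasDerivAt_id (0:ℝ)).const_mul M.trace |>.const_add 1
    have h2 : HasDerivAt (fun t : ℝ => q.eval t * t ^ 2) 0 0 := by
      have := (q.hasDerivAt (0:ℝ)).mul ((hasDerivAt_pow 2 (0:ℝ)))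
      simp at this; exact this
    have h3 := h1.add h2
    simp only [add_zero] at h3
    exact h3
  have hdet' : HasDerivAt (fun t : ℝ =>
      ((1 : Matrix (Fin d) (Fin d) ℝ) + t • M).det) M.trace 0 := hdet
  refine ⟨hdet', ?_⟩
  -- derivative of A
  have hA : HasDerivAt A M 0 := by
    have : HasDerivAt (fun t : ℝ => t • M) M 0 := by
      have h := (hasDerivAt_id (0:ℝ)).smul_const M
      simp at h; exact h
    exact this.const_add (1 : Matrix (Fin d) (Fin d) ℝ)
  -- derivative of inverse
  have hu : IsUnit (A 0) := by rw [hA0]; exact isUnit_one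
  have hinv : HasDerivAt (fun t : ℝ => Ring.inverse (A t)) (-M) 0 := by
    have h1 := hasFDerivAt_ringInverse (𝕜 := ℝ) (R := Matrix (Fin d) (Fin d) ℝ) 1
    simp only [inv_one, Units.val_one] at h1
    rw [← hA0] at h1
    have h2 := h1.comp_hasDerivAt 0 hA
    simp [hA0, ContinuousLinearMap.mulLeftRight_apply] at h2; exact h2
  -- the linear map B ↦ toEuclideanLin Bᵀ n
  let L : Matrix (Fin d) (Fin d) ℝ →ₗ[ℝ] EuclideanSpace ℝ (Fin d) :=
    { toFun := fun B => Matrix.toEuclideanLin Bᵀ n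
      map_add' := by intro B C; simp [Matrix.transpose_add, map_add, LinearMap.add_apply]
      map_smul' := by intro c B; simp [Matrix.transpose_smul, _root_.map_smul, LinearMap.smul_apply] }
  have hv : HasDerivAt (fun t : ℝ => L (Ring.inverse (A t)))
      (L (-M)) 0 := by
    exact (L.toContinuousLinearMap.hasFDerivAt).comp_hasDerivAt 0 hinv
  have hv0 : L (Ring.inverse (A 0)) = n := by
    simp only [L, hA0, Ring.inverse_one, Matrix.transpose_one, LinearMap.coe_mk,
      AddHom.coe_mk]
    apply (WithLp.equiv 2 _).injective
    ext i
    simp [Matrix.toEuclideanLin_apply, Matrix.one_mulVec]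
  have hLM : L (-M) = -(Matrix.toEuclideanLin Mᵀ n) := by
    simp [L]
  -- inner product derivative
  have hip : HasDerivAt (fun t : ℝ => ⟪L (Ring.inverse (A t)), L (Ring.inverse (A t))⟫)
      (⟪L (Ring.inverse (A 0)), L (-M)⟫ + ⟪L (-M), L (Ring.inverse (A 0))⟫) 0 :=
    hv.inner ℝ hv
  have hnn : ⟪L (Ring.inverse (A 0)), L (Ring.inverse (A 0))⟫ = 1 := by
    rw [hv0, real_inner_self_eq_norm_sq, hn]; norm_num
  have hMn : ⟪Matrix.toEuclideanLin Mᵀ n, n⟫ = ⟪Matrix.toEuclideanLin M n, n⟫ := by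
    have h := Matrix.toEuclideanLin_conjTranspose_eq_adjoint M
    rw [Matrix.conjTranspose_eq_transpose_of_trivial] at h
    rw [h, LinearMap.adjoint_inner_left, real_inner_comm]
  have hipval : ⟪L (Ring.inverse (A 0)), L (-M)⟫ + ⟪L (-M), L (Ring.inverse (A 0))⟫
      = -(2 * ⟪Matrix.toEuclideanLin M n, n⟫) := by
    have h1 : ⟪n, (Matrix.toEuclideanLin Mᵀ) n⟫ = ⟪(Matrix.toEuclideanLin M) n, n⟫ := by
      rw [real_inner_comm]; exact hMn
    rw [hv0, hLM, inner_neg_left, inner_neg_right]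
    linarith [h1, hMn]
  rw [hipval] at hip
  -- norm derivative via sqrt
  have hsq : HasDerivAt (fun t : ℝ => Real.sqrt ⟪L (Ring.inverse (A t)), L (Ring.inverse (A t))⟫)
      (-⟪Matrix.toEuclideanLin M n, n⟫) 0 := by
    have hne : ⟪L (Ring.inverse (A 0)), L (Ring.inverse (A 0))⟫ ≠ 0 := by rw [hnn]; norm_num
    have := hip.sqrt hne
    rw [hnn] at this
    convert this using 1
    rw [Real.sqrt_one]; ring
  -- product
  have hprod := hdet.mul hsq
  have hval : M.trace * Real.sqrt ⟪L (Ring.inverse (A 0)), L (Ring.inverse (A 0))⟫ +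
      (A 0).det * -⟪Matrix.toEuclideanLin M n, n⟫
      = M.trace - ⟪Matrix.toEuclideanLin M n, n⟫ := by
    rw [hnn, hA0]
    simp; ring
  rw [hval] at hprod
  have heq2 : (fun t : ℝ =>
      ((1 : Matrix (Fin d) (Fin d) ℝ) + t • M).det *
        ‖Matrix.toEuclideanLin ((((1 : Matrix (Fin d) (Fin d) ℝ) + t • M)⁻¹)ᵀ) n‖)
      = fun t : ℝ => (A t).det * Real.sqrt ⟪L (Ring.inverse (A t)), L (Ring.inverse (A t))⟫ := by
    funext t
    have : ((A t)⁻¹ : Matrix (Fin d) (Fin d) ℝ) = Ring.inverse (A t) := Matrix.nonsing_inv_eq_ringInverse _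
    rw [hAdef]
    simp only [← this]
    congr 1
    rw [real_inner_self_eq_norm_sq]
    rw [Real.sqrt_sq (norm_nonneg _)]
    show ‖L (A t)⁻¹‖ = ‖L (Ring.inverse (A t))‖
    rw [this]
  rw [heq2]
  exact hprod
end
end

section
/- Let M be a d×d real matrix and let n ∈ ℝ^d be a unit vector. Then the matrix-valued function B : t ↦ ((I + tM)⁻¹ ((I + tM)⁻¹)ᵀ) / ‖((I + tM)⁻¹)ᵀ n‖² (defined for all t small enough that I + tM is invertible) has derivative at t = 0 equal to B'(0) = 2⟨M n, n⟩ I − (M + Mᵀ). (With M = Dh(x) the Jacobian of a C¹ deformation field h at a boundary point x with unit normal n, this is the derivative of the matrix B(t) = D(T_t⁻¹) D(T_t⁻¹)ᵀ / ‖(D T_t⁻¹)ᵀ n‖², transported to x, for the perturbation T_t = Id + t h.) -/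
open scoped RealInnerProductSpace
open Matrix

noncomputable section

attribute [local instance] Matrix.linftyOpNormedRing Matrix.linftyOpNormedAlgebra

lemma euc_norm_sq {d : ℕ} (x : EuclideanSpace ℝ (Fin d)) : ‖x‖ ^ 2 = ∑ i, x i ^ 2 := by
  rw [EuclideanSpace.norm_eq, Real.sq_sqrt (by positivity)]
  simp [Real.norm_eq_abs, sq_abs]

lemma inv_deriv {d : ℕ} (M : Matrix (Fin d) (Fin d) ℝ) :
    HasDerivAt (fun t : ℝ => ((1 : Matrix (Fin d) (Fin d) ℝ) + t • M)⁻¹) (-M) 0 := by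
  have hf : HasDerivAt (fun t : ℝ => (1 : Matrix (Fin d) (Fin d) ℝ) + t • M) M 0 := by
    refine (((hasDerivAt_id (0 : ℝ)).smul_const M).const_add (1 : Matrix (Fin d) (Fin d) ℝ)).congr_deriv ?_
    simp
  have hinv := hasFDerivAt_ringInverse (𝕜 := ℝ) (1 : (Matrix (Fin d) (Fin d) ℝ)ˣ)
  have hinv' : HasFDerivAt (Ring.inverse)
      (-((ContinuousLinearMap.mulLeftRight ℝ (Matrix (Fin d) (Fin d) ℝ)) 1) 1)
      ((1 : Matrix (Fin d) (Fin d) ℝ) + (0:ℝ) • M) := by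
    simpa using hinv
  have h2 := hinv'.comp_hasDerivAt 0 hf
  have h3 : HasDerivAt (fun t : ℝ => Ring.inverse ((1 : Matrix (Fin d) (Fin d) ℝ) + t • M)) (-M) 0 := by
    refine h2.congr_deriv ?_
    simp
  simpa only [Matrix.nonsing_inv_eq_ringInverse] using h3

lemma entry_deriv {d : ℕ} (M : Matrix (Fin d) (Fin d) ℝ) (i j : Fin d) :
    HasDerivAt (fun t : ℝ => (((1 : Matrix (Fin d) (Fin d) ℝ) + t • M)⁻¹) i j) (-(M i j)) 0 := by
  let L := (LinearMap.toContinuousLinearMap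
    (Matrix.entryLinearMap ℝ ℝ i j : Matrix (Fin d) (Fin d) ℝ →ₗ[ℝ] ℝ))
  have h := L.hasFDerivAt.comp_hasDerivAt 0 (inv_deriv M)
  have hL : ∀ A : Matrix (Fin d) (Fin d) ℝ, L A = A i j := fun A => rfl
  exact h

lemma prod_entry_deriv {d : ℕ} (M : Matrix (Fin d) (Fin d) ℝ) (k l : Fin d) :
    HasDerivAt (fun t : ℝ =>
      ((((1 : Matrix (Fin d) (Fin d) ℝ) + t • M)⁻¹ *
        (((1 : Matrix (Fin d) (Fin d) ℝ) + t • M)⁻¹)ᵀ)) k l)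
      (-(M k l) - M l k) 0 := by
  have h := HasDerivAt.fun_sum (u := Finset.univ)
    (fun j (_ : j ∈ Finset.univ) => (entry_deriv M k j).mul (entry_deriv M l j))
  have heq : (fun t : ℝ =>
      ((((1 : Matrix (Fin d) (Fin d) ℝ) + t • M)⁻¹ *
        (((1 : Matrix (Fin d) (Fin d) ℝ) + t • M)⁻¹)ᵀ)) k l) =
      fun t : ℝ => ∑ j, (((1 : Matrix (Fin d) (Fin d) ℝ) + t • M)⁻¹) k j *
        (((1 : Matrix (Fin d) (Fin d) ℝ) + t • M)⁻¹) l j := by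
    funext t; simp [Matrix.mul_apply, Matrix.transpose_apply]
  rw [heq]
  refine h.congr_deriv (Eq.symm ?_)
  simp only [Matrix.one_apply, mul_ite, ite_mul, Finset.sum_add_distrib, Finset.sum_ite_eq,
    Finset.sum_ite_eq']
  simp [Matrix.one_apply, mul_ite, ite_mul, Finset.sum_add_distrib, Finset.sum_ite_eq,
    Finset.sum_ite_eq']
  ring

lemma norm_deriv {d : ℕ} (M : Matrix (Fin d) (Fin d) ℝ) (n : EuclideanSpace ℝ (Fin d)) :
    HasDerivAt (fun t : ℝ =>
      ‖Matrix.toEuclideanLin ((((1 : Matrix (Fin d) (Fin d) ℝ) + t • M)⁻¹)ᵀ) n‖ ^ 2)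
      (-(2 * ⟪Matrix.toEuclideanLin M n, n⟫)) 0 := by
  have hq : ∀ t : ℝ,
      ‖Matrix.toEuclideanLin ((((1 : Matrix (Fin d) (Fin d) ℝ) + t • M)⁻¹)ᵀ) n‖ ^ 2 =
      ∑ i, (∑ j, (((1 : Matrix (Fin d) (Fin d) ℝ) + t • M)⁻¹) j i * n j) ^ 2 := by
    intro t
    rw [euc_norm_sq]
    refine Finset.sum_congr rfl fun i _ => ?_
    simp [Matrix.toEuclideanLin_apply, Matrix.mulVec, dotProduct, Matrix.transpose_apply]
  have hinner : ∀ i : Fin d, HasDerivAt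
      (fun t : ℝ => ∑ j, (((1 : Matrix (Fin d) (Fin d) ℝ) + t • M)⁻¹) j i * n j)
      (∑ j, -(M j i) * n j) 0 :=
    fun i => HasDerivAt.fun_sum (fun j _ => (entry_deriv M j i).mul_const (n j))
  have h := HasDerivAt.fun_sum (u := Finset.univ)
    (fun i (_ : i ∈ Finset.univ) => (hinner i).pow 2)
  simp only [funext hq]
  refine h.congr_deriv (Eq.symm ?_)
  have hval : ∀ i : Fin d,
      (∑ j, (((1 : Matrix (Fin d) (Fin d) ℝ) + (0:ℝ) • M)⁻¹) j i * n j) = n i := by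
    intro i; simp [Matrix.one_apply, ite_mul, Finset.sum_ite_eq]
  simp only [hval]
  have hc : ⟪Matrix.toEuclideanLin M n, n⟫ = ∑ i, (∑ j, M i j * n j) * n i := by
    simp [PiLp.inner_apply, RCLike.inner_apply, Matrix.toEuclideanLin_apply, Matrix.mulVec,
      dotProduct]
    exact Finset.sum_congr rfl fun i _ => mul_comm _ _
  rw [hc, Finset.mul_sum, ← Finset.sum_neg_distrib]
  have lhs : ∀ x : Fin d, -(2 * ((∑ j, M x j * n j) * n x)) =
      ∑ j, (-2) * (M x j * n j * n x) := by
    intro x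
    rw [Finset.sum_mul, Finset.mul_sum, ← Finset.sum_neg_distrib]
    exact Finset.sum_congr rfl fun j _ => by ring
  have rhs : ∀ x : Fin d, (2:ℕ) * n x ^ (2-1) * ∑ j, -(M j x) * n j =
      ∑ j, (-2) * (M j x * n x * n j) := by
    intro x
    rw [Finset.mul_sum]
    exact Finset.sum_congr rfl fun j _ => by push_cast; ring
  simp only [lhs, rhs]
  exact Finset.sum_comm

/-- `B(t) = ((I + tM)⁻¹ ((I + tM)⁻¹)ᵀ) / ‖((I + tM)⁻¹)ᵀ n‖²`. -/
def Bmat {d : ℕ} (M : Matrix (Fin d) (Fin d) ℝ) (n : EuclideanSpace ℝ (Fin d)) (t : ℝ) :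
    Matrix (Fin d) (Fin d) ℝ :=
  (‖Matrix.toEuclideanLin ((((1 : Matrix (Fin d) (Fin d) ℝ) + t • M)⁻¹)ᵀ) n‖ ^ 2)⁻¹ •
    (((1 : Matrix (Fin d) (Fin d) ℝ) + t • M)⁻¹ *
      (((1 : Matrix (Fin d) (Fin d) ℝ) + t • M)⁻¹)ᵀ)

/-- Entrywise derivative at `t = 0`: `B'(0) = 2⟨M n, n⟩ I − (M + Mᵀ)`. -/
theorem statement4 {d : ℕ} (M : Matrix (Fin d) (Fin d) ℝ)
    (n : EuclideanSpace ℝ (Fin d)) (hn : ‖n‖ = 1) (k l : Fin d) :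
    HasDerivAt (fun t : ℝ => Bmat M n t k l)
      (((2 * ⟪Matrix.toEuclideanLin M n, n⟫) • (1 : Matrix (Fin d) (Fin d) ℝ) - (M + Mᵀ)) k l)
      0 := by
  set c : ℝ := ⟪Matrix.toEuclideanLin M n, n⟫ with hc
  have hg0 : ‖Matrix.toEuclideanLin ((((1 : Matrix (Fin d) (Fin d) ℝ) + (0:ℝ) • M)⁻¹)ᵀ) n‖ ^ 2
      = 1 := by
    have h1 : (Matrix.toEuclideanLin (1 : Matrix (Fin d) (Fin d) ℝ)) n = n := by
      simp [Matrix.toEuclideanLin_apply, Matrix.one_mulVec]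
    simp [h1, hn]
  have hginv : HasDerivAt (fun t : ℝ =>
      (‖Matrix.toEuclideanLin ((((1 : Matrix (Fin d) (Fin d) ℝ) + t • M)⁻¹)ᵀ) n‖ ^ 2)⁻¹)
      (2 * c) 0 := by
    have := (norm_deriv M n).inv (by rw [hg0]; norm_num)
    refine this.congr_deriv (Eq.symm ?_)
    rw [hg0]
    ring
  have hmul := hginv.mul (prod_entry_deriv M k l)
  have heq : (fun t : ℝ => Bmat M n t k l) = fun t : ℝ =>
      (‖Matrix.toEuclideanLin ((((1 : Matrix (Fin d) (Fin d) ℝ) + t • M)⁻¹)ᵀ) n‖ ^ 2)⁻¹ *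
      ((((1 : Matrix (Fin d) (Fin d) ℝ) + t • M)⁻¹ *
        (((1 : Matrix (Fin d) (Fin d) ℝ) + t • M)⁻¹)ᵀ) k l) := by
    funext t; simp [Bmat]
  rw [heq]
  refine hmul.congr_deriv (Eq.symm ?_)
  rw [hg0]
  simp [Matrix.one_apply, Matrix.mul_apply, Matrix.transpose_apply, mul_ite, ite_mul,
    Finset.sum_ite_eq]
  ring
end
end

section
/- Let M be a d×d real matrix and let n ∈ ℝ^d be a unit vector. Then the vector-valued function t ↦ ((I + tMᵀ)⁻¹ n) / ‖(I + tMᵀ)⁻¹ n‖ (defined for all t small enough that I + tMᵀ is invertible) has derivative at t = 0 equal to −(Mᵀ n − ⟨Mᵀ n, n⟩ n), i.e. minus the component of Mᵀ n orthogonal to n. (With M = Dh(x) the Jacobian of a C¹ deformation field h at a boundary point x with outer unit normal n, this function is the transported unit normal of the deformed boundary under T_t = Id + t h, so this computes the material derivative ṅ of the normal vector, which the paper writes as ṅ = −∇_τ(h·n) + Dn h_τ.) -/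
open scoped RealInnerProductSpace
open Matrix

noncomputable section

attribute [local instance] Matrix.frobeniusNormedRing Matrix.frobeniusNormedAlgebra

/-- The transported unit normal `t ↦ ((I + tMᵀ)⁻¹ n) / ‖(I + tMᵀ)⁻¹ n‖` has derivative
at `t = 0` equal to `−(Mᵀ n − ⟪Mᵀ n, n⟫ n)`, minus the component of `Mᵀ n` orthogonal
to `n`. -/
theorem statement6 {d : ℕ} (M : Matrix (Fin d) (Fin d) ℝ)
    (n : EuclideanSpace ℝ (Fin d)) (hn : ‖n‖ = 1) :
    HasDerivAt
      (fun t : ℝ =>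
        ‖Matrix.toEuclideanLin (((1 : Matrix (Fin d) (Fin d) ℝ) + t • Mᵀ)⁻¹) n‖⁻¹ •
          Matrix.toEuclideanLin (((1 : Matrix (Fin d) (Fin d) ℝ) + t • Mᵀ)⁻¹) n)
      (-(Matrix.toEuclideanLin Mᵀ n - ⟪Matrix.toEuclideanLin Mᵀ n, n⟫ • n)) 0 := by
  classical
  -- the linear evaluation map X ↦ (toEuclideanLin X) n, as a continuous linear map
  let L : Matrix (Fin d) (Fin d) ℝ →L[ℝ] EuclideanSpace ℝ (Fin d) :=
    LinearMap.toContinuousLinearMap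
      ((LinearMap.applyₗ n).comp (Matrix.toEuclideanLin.toLinearMap))
  have hL : ∀ X : Matrix (Fin d) (Fin d) ℝ, L X = Matrix.toEuclideanLin X n := fun _ => rfl
  -- the matrix curve
  set A : ℝ → Matrix (Fin d) (Fin d) ℝ := fun t => (1 : Matrix (Fin d) (Fin d) ℝ) + t • Mᵀ
    with hAdef
  have hA : HasDerivAt A Mᵀ 0 := by
    have h := (((hasDerivAt_id (0 : ℝ)).smul_const Mᵀ).const_add
      (1 : Matrix (Fin d) (Fin d) ℝ))
    rw [one_smul] at h
    exact h
  have hA0 : A 0 = 1 := by simp [hAdef]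
  -- derivative of the inverse
  have hinv : HasDerivAt (fun t => Ring.inverse (A t)) (-Mᵀ) 0 := by
    have h1 := hasFDerivAt_ringInverse (𝕜 := ℝ) (1 : (Matrix (Fin d) (Fin d) ℝ)ˣ)
    rw [show ((1 : (Matrix (Fin d) (Fin d) ℝ)ˣ) : Matrix (Fin d) (Fin d) ℝ) = A 0 from
      hA0.symm] at h1
    have := h1.comp_hasDerivAt 0 hA
    exact this.congr_deriv (by simp)
  -- derivative of f t = toEuclideanLin (A t)⁻¹ n
  set v : EuclideanSpace ℝ (Fin d) := Matrix.toEuclideanLin Mᵀ n with hv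
  have hf : HasDerivAt (fun t => Matrix.toEuclideanLin (A t)⁻¹ n) (-v) 0 := by
    have := L.hasFDerivAt.comp_hasDerivAt 0 hinv
    simp only [Matrix.nonsing_inv_eq_ringInverse]
    exact this.congr_deriv (L.map_neg Mᵀ)
  have hf0 : Matrix.toEuclideanLin ((A 0)⁻¹) n = n := by
    rw [hA0]; ext i; simp [Matrix.toEuclideanLin_apply, Matrix.one_mulVec]
  -- derivative of the inner product ⟪f t, f t⟫
  have hr : HasDerivAt (fun t => ⟪Matrix.toEuclideanLin (A t)⁻¹ n, Matrix.toEuclideanLin (A t)⁻¹ n⟫)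
      (⟪n, -v⟫ + ⟪-v, n⟫) 0 := by
    have := hf.inner ℝ hf
    rwa [hf0] at this
  -- derivative of the norm ‖f t‖
  have hnorm : HasDerivAt (fun t => ‖Matrix.toEuclideanLin (A t)⁻¹ n‖) (-⟪v, n⟫) 0 := by
    have hsq : ∀ t, ‖Matrix.toEuclideanLin (A t)⁻¹ n‖ =
        Real.sqrt ⟪Matrix.toEuclideanLin (A t)⁻¹ n, Matrix.toEuclideanLin (A t)⁻¹ n⟫ := by
      intro t; rw [real_inner_self_eq_norm_sq, Real.sqrt_sq (norm_nonneg _)]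
    have h0 : ⟪Matrix.toEuclideanLin ((A 0)⁻¹) n, Matrix.toEuclideanLin ((A 0)⁻¹) n⟫ = 1 := by
      rw [hf0, real_inner_self_eq_norm_sq, hn]; norm_num
    have := hr.sqrt (by rw [h0]; norm_num)
    simp only [← hsq] at this
    convert this using 1
    rw [hf0, hn, inner_neg_right, inner_neg_left, real_inner_comm n v]
    ring
  have hnorm0 : ‖Matrix.toEuclideanLin ((A 0)⁻¹) n‖ = 1 := by rw [hf0, hn]
  -- derivative of the inverse norm
  have hninv : HasDerivAt (fun t => ‖Matrix.toEuclideanLin (A t)⁻¹ n‖⁻¹) (⟪v, n⟫) 0 := by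
    have := hnorm.inv (by rw [hnorm0]; norm_num)
    rw [hnorm0] at this; norm_num at this; exact this
  -- combine with the smul
  have := hninv.smul hf
  rw [hf0, hn] at this
  exact this.congr_deriv (by simp only [inv_one, one_smul]; module)
end
end

section
/- Let N : ℝ^d → ℝ^d be differentiable at a point x with n = N(x) a unit vector, and suppose the Jacobian DN(x) is symmetric and DN(x) n = 0. Let h : ℝ^d → ℝ^d be differentiable at x. Then the tangential part of the gradient of y ↦ ⟨h(y), N(y)⟩ at x satisfies ∇_τ(⟨h, N⟩)(x) = (Dh(x)ᵀ n − ⟨Dh(x)ᵀ n, n⟩ n) + DN(x) (h(x) − ⟨h(x), n⟩ n); in short, ∇_τ(h·N) = (Dhᵀ n)_τ + DN h_τ. (This identity is the algebraic content relating the material derivative ṅ = −∇_τ(h·n) + Dn h_τ and the shape derivative n' = −∇_τ(h·n) of the unit normal under the perturbation Id + t h, where N is a unitary extension of the normal, e.g. the gradient of the signed distance function, and DN is its second fundamental form.) -/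
open scoped RealInnerProductSpace

noncomputable section

/-- With `n = N(x)` a unit vector, `DN(x)` symmetric and `DN(x) n = 0`,
`∇_τ(⟨h, N⟩)(x) = (Dh(x)ᵀ n)_τ + DN(x) h_τ(x)`, where `w_τ = w − ⟨w, n⟩ n`. -/
theorem statement7 {d : ℕ} (N h : E d → E d) (x : E d)
    (hN : DifferentiableAt ℝ N x) (hh : DifferentiableAt ℝ h x)
    (hn : ‖N x‖ = 1)
    (hsym : ∀ w z : E d, ⟪fderiv ℝ N x w, z⟫ = ⟪w, fderiv ℝ N x z⟫)
    (hker : fderiv ℝ N x (N x) = 0) :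
    gradient (fun y => ⟪h y, N y⟫) x
        - ⟪gradient (fun y => ⟪h y, N y⟫) x, N x⟫ • N x =
      (ContinuousLinearMap.adjoint (fderiv ℝ h x) (N x)
          - ⟪ContinuousLinearMap.adjoint (fderiv ℝ h x) (N x), N x⟫ • N x)
        + fderiv ℝ N x (h x - ⟪h x, N x⟫ • N x) := by
  set A := fderiv ℝ h x with hA
  set B := fderiv ℝ N x with hB
  set n := N x with hnx
  have hgrad : HasGradientAt (fun y => ⟪h y, N y⟫)
      (ContinuousLinearMap.adjoint A n + B (h x)) x := by
    rw [hasGradientAt_iff_hasFDerivAt]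
    have := (hh.hasFDerivAt.inner ℝ hN.hasFDerivAt)
    refine this.congr_fderiv (Eq.symm ?_)
    ext w
    simp only [fderivInnerCLM_apply, InnerProductSpace.toDual_apply_apply,
      ContinuousLinearMap.comp_apply, ContinuousLinearMap.prod_apply]
    rw [inner_add_left, ContinuousLinearMap.adjoint_inner_left, hsym (h x) w,
      real_inner_comm n (A w)]
    exact add_comm _ _
  rw [hgrad.gradient]
  have hBn : ⟪B (h x), n⟫ = 0 := by
    rw [hsym, hker, inner_zero_right]
  rw [map_sub, map_smul, hker, smul_zero, sub_zero, inner_add_left, hBn, add_zero]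
  abel
end
end
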